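/- Let G be a graph and F : V(G) → 2^ℕ with |F(v)| ≤ d(v)/2 for all v. Suppose for each v there exist ℓ(v) ≤ u(v) with F(v) = {0,…,ℓ(v)−1} ∪ {u(v)+1,…,d(v)} (i.e., the allowed out-degrees form a single interval [ℓ(v), u(v)]). Then G admits an F-avoiding orientation. -/

import Mathlib

attribute [local instance] Classical.propDecidable

/-- A loopless multigraph: edges indexed by `E` with endpoints in `Sym2 V`. -/
structure Multigraph (V E : Type) where
  ends : E → Sym2 V
  loopless : ∀ e, ¬ (ends e).IsDiag

namespace Multigraph

variable {V E : Type}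

/-- Degree of a vertex: number of edges incident to it. -/
noncomputable def deg [Fintype E] (G : Multigraph V E) (v : V) : ℕ :=
  (Finset.univ.filter fun e => v ∈ G.ends e).card

/-- Two vertices are adjacent if some edge joins them. -/
def Adj (G : Multigraph V E) (u v : V) : Prop :=
  u ≠ v ∧ ∃ e, G.ends e = s(u, v)

/-- An orientation assigns a tail and head to each edge, consistent with its endpoints. -/
structure Orientation (G : Multigraph V E) where
  tail : E → V
  head : E → V
  consistent : ∀ e, G.ends e = s(tail e, head e)

/-- Out-degree of a vertex in an orientation. -/
noncomputable def Orientation.outDeg [Fintype E] {G : Multigraph V E} (D : G.Orientation)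
    (v : V) : ℕ :=
  (Finset.univ.filter fun e => D.tail e = v).card

/-- An orientation is `F`-avoiding if no vertex has out-degree in its forbidden list. -/
def Orientation.Avoids [Fintype E] {G : Multigraph V E} (D : G.Orientation)
    (F : V → Finset ℕ) : Prop :=
  ∀ v, D.outDeg v ∉ F v

/-- Number of edges with both endpoints in `S`. -/
noncomputable def eIn [Fintype E] (G : Multigraph V E) (S : Finset V) : ℕ :=
  (Finset.univ.filter fun e => ∀ w ∈ G.ends e, w ∈ S).card

/-- Number of edges with exactly one endpoint in `S`. -/
noncomputable def cut [Fintype E] (G : Multigraph V E) (S : Finset V) : ℕ :=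
  (Finset.univ.filter fun e => (∃ w ∈ G.ends e, w ∈ S) ∧ ¬ ∀ w ∈ G.ends e, w ∈ S).card

/-- Reachability by directed paths in an orientation. -/
def Orientation.Reach {G : Multigraph V E} (D : G.Orientation) : V → V → Prop :=
  Relation.ReflTransGen fun a b => ∃ e, D.tail e = a ∧ D.head e = b

end Multigraph


open Multigraph Finset

section Aux

variable {V E : Type} {G : Multigraph V E}

/-- tail and head of an edge differ. -/
lemma tail_ne_head (D : G.Orientation) (e : E) : D.tail e ≠ D.head e := by
  intro h
  exact G.loopless e (by rw [D.consistent e, Sym2.mk_isDiag_iff]; exact h)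

lemma mem_ends_iff (D : G.Orientation) (e : E) (x : V) :
    x ∈ G.ends e ↔ D.tail e = x ∨ D.head e = x := by
  rw [D.consistent e, Sym2.mem_iff]
  constructor
  · rintro (h | h) <;> [left; right] <;> exact h.symm
  · rintro (h | h) <;> [left; right] <;> exact h.symm

/-- The reverse of an orientation. -/
def Multigraph.Orientation.rev (D : G.Orientation) : G.Orientation where
  tail := D.head
  head := D.tail
  consistent := fun e => by rw [D.consistent e, Sym2.eq_swap]

lemma deg_eq [Fintype E] (D : G.Orientation) (x : V) :
    G.deg x = D.outDeg x + D.rev.outDeg x := by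
  classical
  unfold Multigraph.deg Multigraph.Orientation.outDeg
  rw [← Finset.card_union_of_disjoint, ← Finset.filter_or]
  · congr 1
    apply Finset.filter_congr
    intro e _
    simp only [mem_ends_iff D e x, Orientation.rev]
  · rw [Finset.disjoint_left]
    intro e he1 he2
    simp only [Finset.mem_filter] at he1 he2
    exact tail_ne_head D e (he1.2.trans he2.2.symm)

lemma outDeg_le_deg [Fintype E] (D : G.Orientation) (x : V) :
    D.outDeg x ≤ G.deg x := by
  rw [deg_eq D x]; omega

/-- Walks as lists of edges. -/
def Walk (D : G.Orientation) : V → List E → V → Prop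
  | v, [], w => v = w
  | v, e :: es, w => D.tail e = v ∧ Walk D (D.head e) es w

lemma walk_append (D : G.Orientation) (p q : List E) (v w : V) :
    Walk D v (p ++ q) w ↔ ∃ m, Walk D v p m ∧ Walk D m q w := by
  induction p generalizing v with
  | nil =>
    simp only [List.nil_append, Walk]
    constructor
    · exact fun h => ⟨v, rfl, h⟩
    · rintro ⟨m, rfl, h⟩; exact h
  | cons e es ih =>
    simp only [List.cons_append, Walk, List.append_eq, ih]
    tauto

lemma reach_walk (D : G.Orientation) {v w : V} (h : D.Reach v w) :
    ∃ es, Walk D v es w := by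
  induction h with
  | refl => exact ⟨[], rfl⟩
  | tail _ hstep ih =>
    obtain ⟨es, hes⟩ := ih
    obtain ⟨e, he1, he2⟩ := hstep
    refine ⟨es ++ [e], (walk_append D es [e] _ _).2 ⟨_, hes, he1, ?_⟩⟩
    exact he2

lemma exists_dup {α : Type} {li : List α} (h : ¬ li.Nodup) :
    ∃ (a : α) (p q r : List α), li = p ++ a :: q ++ a :: r := by
  induction li with
  | nil => exact absurd List.nodup_nil h
  | cons x xs ih =>
    by_cases hx : x ∈ xs
    · obtain ⟨s, t, rfl⟩ := List.append_of_mem hx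
      exact ⟨x, [], s, t, rfl⟩
    · have : ¬ xs.Nodup := fun hn => h (List.nodup_cons.2 ⟨hx, hn⟩)
      obtain ⟨a, p, q, r, rfl⟩ := ih this
      exact ⟨a, x :: p, q, r, rfl⟩

lemma walk_nodup (D : G.Orientation) :
    ∀ (n : ℕ) (es : List E) (v w : V), es.length ≤ n → Walk D v es w →
      ∃ es', es'.Nodup ∧ Walk D v es' w := by
  intro n
  induction n with
  | zero =>
    intro es v w hlen hw
    rw [Nat.le_zero, List.length_eq_zero_iff] at hlen
    exact ⟨es, hlen ▸ List.nodup_nil, hw⟩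
  | succ n ih =>
    intro es v w hlen hw
    by_cases hnd : es.Nodup
    · exact ⟨es, hnd, hw⟩
    · obtain ⟨a, p, q, r, rfl⟩ := exists_dup hnd
      rw [walk_append] at hw
      obtain ⟨m, hp, ht, hr⟩ := hw
      rw [walk_append] at hp
      obtain ⟨m1, hp1, ht1, hq⟩ := hp
      have hw' : Walk D v (p ++ a :: r) w := by
        rw [walk_append]
        exact ⟨m1, hp1, ht1, hr⟩
      apply ih (p ++ a :: r) v w _ hw'
      simp only [List.length_append, List.length_cons] at *
      omega

end Aux

section Flip

variable {V E : Type} {G : Multigraph V E}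

/-- Flip a single edge. -/
noncomputable def flipEdge (D : G.Orientation) (e : E) : G.Orientation where
  tail := fun e' => if e' = e then D.head e else D.tail e'
  head := fun e' => if e' = e then D.tail e else D.head e'
  consistent := fun e' => by
    by_cases h : e' = e
    · subst h
      show G.ends e' = s(if e' = e' then D.head e' else D.tail e',
        if e' = e' then D.tail e' else D.head e')
      rw [if_pos rfl, if_pos rfl, D.consistent e', Sym2.eq_swap]
    · simp only [if_neg h]
      exact D.consistent e'

lemma flipEdge_tail_ne (D : G.Orientation) (e e' : E) (h : e' ≠ e) :
    (flipEdge D e).tail e' = D.tail e' := if_neg h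

lemma flipEdge_head_ne (D : G.Orientation) (e e' : E) (h : e' ≠ e) :
    (flipEdge D e).head e' = D.head e' := if_neg h

lemma flipEdge_outDeg [Fintype E] (D : G.Orientation) (e : E) (x : V) :
    ((flipEdge D e).outDeg x : ℤ) =
      (D.outDeg x : ℤ) + (if D.head e = x then 1 else 0) - (if D.tail e = x then 1 else 0) := by
  classical
  unfold Multigraph.Orientation.outDeg
  rw [Finset.card_filter, Finset.card_filter]
  push_cast
  rw [← Finset.add_sum_erase _ _ (Finset.mem_univ e), ← Finset.add_sum_erase
    (f := fun e' => if D.tail e' = x then (1 : ℤ) else 0) _ (Finset.mem_univ e)]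
  have hsum : ∑ e' ∈ Finset.univ.erase e,
      (if (flipEdge D e).tail e' = x then (1 : ℤ) else 0) =
      ∑ e' ∈ Finset.univ.erase e, (if D.tail e' = x then (1 : ℤ) else 0) := by
    apply Finset.sum_congr rfl
    intro e' he'
    rw [flipEdge_tail_ne D e e' (Finset.mem_erase.1 he').1]
  rw [hsum]
  have : (flipEdge D e).tail e = D.head e := if_pos rfl
  rw [this]
  ring

/-- Walks are preserved by flipping an edge not on the walk. -/
lemma walk_flipEdge (D : G.Orientation) (e : E) :
    ∀ (es : List E) (v w : V), e ∉ es → Walk D v es w → Walk (flipEdge D e) v es w := by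
  intro es
  induction es with
  | nil => intro v w _ h; exact h
  | cons f fs ih =>
    intro v w hne hw
    obtain ⟨h1, h2⟩ := hw
    have hf : f ≠ e := fun h => hne (h ▸ List.mem_cons_self (a := f) (l := fs))
    refine ⟨by rw [flipEdge_tail_ne D e f hf]; exact h1, ?_⟩
    rw [flipEdge_head_ne D e f hf]
    exact ih _ _ (fun h => hne (List.mem_cons_of_mem f h)) h2

/-- Reversing an edge-disjoint walk from `v` to `w`. -/
lemma walk_flip [Fintype E] :
    ∀ (es : List E) (D : G.Orientation) (v w : V), es.Nodup → Walk D v es w →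
      ∃ D' : G.Orientation, ∀ x, (D'.outDeg x : ℤ) =
        (D.outDeg x : ℤ) + (if x = w then 1 else 0) - (if x = v then 1 else 0) := by
  intro es
  induction es with
  | nil =>
    intro D v w _ h
    cases h
    exact ⟨D, fun x => by ring⟩
  | cons e es ih =>
    intro D v w hnd hw
    obtain ⟨h1, h2⟩ := hw
    have hnotmem : e ∉ es := (List.nodup_cons.1 hnd).1
    have h2' : Walk (flipEdge D e) (D.head e) es w := walk_flipEdge D e es _ _ hnotmem h2
    obtain ⟨D', hD'⟩ := ih (flipEdge D e) (D.head e) w (List.nodup_cons.1 hnd).2 h2'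
    refine ⟨D', fun x => ?_⟩
    rw [hD' x, flipEdge_outDeg D e x]
    have h3 := tail_ne_head D e
    subst h1
    by_cases hx1 : x = D.head e <;> by_cases hx2 : x = D.tail e <;>
      by_cases hx3 : x = w <;> simp_all [eq_comm]

end Flip

section Count

variable {V E : Type} {G : Multigraph V E}

lemma reach_head (D : G.Orientation) {v : V} (e : E) (h : D.Reach v (D.tail e)) :
    D.Reach v (D.head e) :=
  Relation.ReflTransGen.tail h ⟨e, rfl, rfl⟩

/-- Counting argument: if `deg x ≤ 2 u x` for all `x` and `u v < outdeg v`, then some vertex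
reachable from `v` has out-degree below `u`. -/
lemma exists_under [Fintype V] [Fintype E] (D : G.Orientation) (u : V → ℕ)
    (hu : ∀ x, G.deg x ≤ 2 * u x) (v : V) (hv : u v < D.outDeg v) :
    ∃ w, D.Reach v w ∧ D.outDeg w < u w := by
  classical
  by_contra hcon
  push_neg at hcon
  set S : Finset V := Finset.univ.filter (fun w => D.Reach v w) with hS
  have hvS : v ∈ S := Finset.mem_filter.2 ⟨Finset.mem_univ v, Relation.ReflTransGen.refl⟩
  -- sum of outdegrees over S equals number of edges with tail in S
  have key1 : (Finset.univ.filter fun e => D.tail e ∈ S).card = ∑ w ∈ S, D.outDeg w := by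
    rw [Finset.card_eq_sum_card_fiberwise (f := D.tail) (s := Finset.univ.filter fun e => D.tail e ∈ S) (t := S)
      (fun e he => (Finset.mem_filter.1 he).2)]
    apply Finset.sum_congr rfl
    intro w hw
    rw [Finset.filter_filter]
    show (Finset.univ.filter fun e => D.tail e ∈ S ∧ D.tail e = w).card =
      (Finset.univ.filter fun e => D.tail e = w).card
    congr 1
    apply Finset.filter_congr
    intro e _
    constructor
    · exact fun h => h.2
    · exact fun h => ⟨h ▸ hw, h⟩
  -- sum of degrees over S is at least twice the number of edges with tail in S
  have key2 : 2 * (Finset.univ.filter fun e => D.tail e ∈ S).card ≤ ∑ w ∈ S, G.deg w := by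
    have hdeg : ∀ w, G.deg w = ∑ e ∈ Finset.univ, if w ∈ G.ends e then 1 else 0 := by
      intro w; unfold Multigraph.deg; rw [Finset.card_filter]
    calc 2 * (Finset.univ.filter fun e => D.tail e ∈ S).card
        = ∑ e ∈ Finset.univ.filter (fun e => D.tail e ∈ S), 2 := by
          rw [Finset.sum_const, smul_eq_mul, mul_comm]
      _ ≤ ∑ e ∈ Finset.univ.filter (fun e => D.tail e ∈ S),
            (S.filter fun w => w ∈ G.ends e).card := by
          apply Finset.sum_le_sum
          intro e he
          have htS : D.tail e ∈ S := (Finset.mem_filter.1 he).2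
          have hhS : D.head e ∈ S := by
            rw [hS, Finset.mem_filter] at htS ⊢
            exact ⟨Finset.mem_univ _, reach_head D e htS.2⟩
          have hsub : {D.tail e, D.head e} ⊆ S.filter fun w => w ∈ G.ends e := by
            intro x hx
            rcases Finset.mem_insert.1 hx with h | h
            · subst h
              exact Finset.mem_filter.2 ⟨htS, (mem_ends_iff D e _).2 (Or.inl rfl)⟩
            · rw [Finset.mem_singleton] at h
              subst h
              exact Finset.mem_filter.2 ⟨hhS, (mem_ends_iff D e _).2 (Or.inr rfl)⟩
          have hcard : ({D.tail e, D.head e} : Finset V).card = 2 := by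
            rw [Finset.card_insert_of_notMem, Finset.card_singleton]
            rw [Finset.mem_singleton]
            exact tail_ne_head D e
          rw [← hcard]
          exact Finset.card_le_card hsub
      _ ≤ ∑ e ∈ (Finset.univ : Finset E), (S.filter fun w => w ∈ G.ends e).card := by
          apply Finset.sum_le_sum_of_subset
          exact Finset.filter_subset _ _
      _ = ∑ w ∈ S, G.deg w := by
          simp only [hdeg, Finset.card_filter]
          rw [Finset.sum_comm]
  -- but deg w ≤ 2 * u w ≤ 2 * outdeg w with strict at v
  have key3 : ∑ w ∈ S, G.deg w < 2 * ∑ w ∈ S, D.outDeg w := by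
    have h1 : ∑ w ∈ S, G.deg w ≤ ∑ w ∈ S, 2 * u w :=
      Finset.sum_le_sum fun w _ => hu w
    have h2 : ∑ w ∈ S, u w < ∑ w ∈ S, D.outDeg w := by
      apply Finset.sum_lt_sum
      · intro w hw
        exact hcon w (Finset.mem_filter.1 hw).2
      · exact ⟨v, hvS, hv⟩
    calc ∑ w ∈ S, G.deg w ≤ ∑ w ∈ S, 2 * u w := h1
      _ = 2 * ∑ w ∈ S, u w := by rw [Finset.mul_sum]
      _ < 2 * ∑ w ∈ S, D.outDeg w := by omega
  rw [key1] at key2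
  omega

end Count

section Phi

variable {V E : Type} {G : Multigraph V E}

lemma phi_lt [Fintype V] [Fintype E] (l u : V → ℕ) (hlu : ∀ v, l v ≤ u v)
    (D D' : G.Orientation) (a b : V) (hab : a ≠ b)
    (hdeg : ∀ x, (D'.outDeg x : ℤ) = (D.outDeg x : ℤ)
      + (if x = a then 1 else 0) - (if x = b then 1 else 0))
    (hA : D.outDeg a < u a) (hB : l b < D.outDeg b)
    (hstrict : D.outDeg a < l a ∨ u b < D.outDeg b) :
    ∑ x, ((D'.outDeg x - u x) + (l x - D'.outDeg x)) <
    ∑ x, ((D.outDeg x - u x) + (l x - D.outDeg x)) := by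
  apply Finset.sum_lt_sum
  · intro x _
    have h := hdeg x
    have h1 := hlu x
    by_cases hxa : x = a
    · subst hxa
      rw [if_pos rfl, if_neg hab] at h
      omega
    · by_cases hxb : x = b
      · subst hxb
        rw [if_neg hxa, if_pos rfl] at h
        omega
      · rw [if_neg hxa, if_neg hxb] at h
        omega
  · rcases hstrict with hs | hs
    · refine ⟨a, Finset.mem_univ a, ?_⟩
      have h := hdeg a
      have h1 := hlu a
      rw [if_pos rfl, if_neg hab] at h
      omega
    · refine ⟨b, Finset.mem_univ b, ?_⟩
      have h := hdeg b
      have h1 := hlu b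
      rw [if_neg (Ne.symm hab), if_pos rfl] at h
      omega

end Phi


/-- if each list of forbidden out-degrees is the complement in
`{0,…,d(v)}` of an interval `[l v, u v]` and `|F(v)| ≤ d(v)/2`, then `G` admits an
`F`-avoiding orientation. -/
theorem stmt10 {V E : Type} [Fintype V] [Fintype E] (G : Multigraph V E)
    (F : V → Finset ℕ) (l u : V → ℕ)
    (hlu : ∀ v, l v ≤ u v)
    (hform : ∀ v, F v = Finset.range (l v) ∪ Finset.Icc (u v + 1) (G.deg v))
    (hF : ∀ v, 2 * (F v).card ≤ G.deg v) :
    ∃ D : G.Orientation, D.Avoids F := by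
  classical
  -- an orientation exists
  have hex : ∀ e : E, ∃ p : V × V, G.ends e = s(p.1, p.2) := fun e =>
    Sym2.inductionOn (G.ends e) (fun x y => ⟨(x, y), rfl⟩)
  let D0 : G.Orientation :=
    ⟨fun e => (Classical.choose (hex e)).1, fun e => (Classical.choose (hex e)).2,
      fun e => Classical.choose_spec (hex e)⟩
  -- degree bounds
  have hb : ∀ v, 2 * l v ≤ G.deg v ∧ G.deg v ≤ 2 * u v := by
    intro v
    have hcard := hF v
    rw [hform v, Finset.card_union_of_disjoint] at hcard
    · rw [Finset.card_range, Nat.card_Icc] at hcard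
      omega
    · rw [Finset.disjoint_left]
      intro a ha hb'
      rw [Finset.mem_range] at ha
      rw [Finset.mem_Icc] at hb'
      have := hlu v
      omega
  -- minimize the potential
  set Φ : G.Orientation → ℕ :=
    fun D => ∑ x, ((D.outDeg x - u x) + (l x - D.outDeg x)) with hΦ
  have hne : {n | ∃ D : G.Orientation, Φ D = n}.Nonempty := ⟨Φ D0, D0, rfl⟩
  obtain ⟨D, hD⟩ := Nat.sInf_mem hne
  have hmin : ∀ D' : G.Orientation, Φ D ≤ Φ D' := by
    intro D'
    rw [hD]
    exact Nat.sInf_le ⟨D', rfl⟩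
  -- every vertex has out-degree in [l, u]
  have hgood : ∀ v, l v ≤ D.outDeg v ∧ D.outDeg v ≤ u v := by
    intro v
    by_contra hbad
    rcases not_and_or.1 hbad with h | h
    · -- out-degree too small : work in the reversed orientation
      push_neg at h
      set u' : V → ℕ := fun x => G.deg x - l x with hu'def
      have hu' : ∀ x, G.deg x ≤ 2 * u' x := by
        intro x
        have := (hb x).1
        simp only [hu'def]
        omega
      have hv' : u' v < D.rev.outDeg v := by
        have h1 := deg_eq D v
        have h2 := (hb v).1
        simp only [hu'def]
        omega
      obtain ⟨w, hreach, hw⟩ := exists_under D.rev u' hu' v hv'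
      have hlw : l w < D.outDeg w := by
        have h1 := deg_eq D w
        have h2 := (hb w).1
        simp only [hu'def] at hw
        omega
      have hvw : v ≠ w := fun hh => by rw [hh] at h; omega
      obtain ⟨es, hes⟩ := reach_walk D.rev hreach
      obtain ⟨es', hnd, hwk⟩ := walk_nodup D.rev es.length es v w le_rfl hes
      obtain ⟨D₂, hD₂⟩ := walk_flip es' D.rev v w hnd hwk
      -- reverse back
      have hdeg3 : ∀ x, (D₂.rev.outDeg x : ℤ) = (D.outDeg x : ℤ)
          + (if x = v then 1 else 0) - (if x = w then 1 else 0) := by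
        intro x
        have e1 := hD₂ x
        have e2 := deg_eq D₂ x
        have e3 := deg_eq D x
        split_ifs at e1 ⊢ <;> omega
      have hlt := phi_lt l u hlu D D₂.rev v w hvw hdeg3
        (by have := hlu v; omega) hlw (Or.inl h)
      have := hmin D₂.rev
      simp only [hΦ] at this
      omega
    · -- out-degree too big
      push_neg at h
      obtain ⟨w, hreach, hw⟩ := exists_under D u (fun x => (hb x).2) v h
      have hvw : w ≠ v := fun hh => by rw [hh] at hw; omega
      obtain ⟨es, hes⟩ := reach_walk D hreach
      obtain ⟨es', hnd, hwk⟩ := walk_nodup D es.length es v w le_rfl hes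
      obtain ⟨D', hD'⟩ := walk_flip es' D v w hnd hwk
      have hlt := phi_lt l u hlu D D' w v hvw hD' hw
        (by have := hlu v; omega) (Or.inr h)
      have := hmin D'
      simp only [hΦ] at this
      omega
  -- conclude
  refine ⟨D, fun v => ?_⟩
  rw [hform v]
  obtain ⟨h1, h2⟩ := hgood v
  simp only [Finset.mem_union, Finset.mem_range, Finset.mem_Icc]
  push_neg
  refine ⟨h1, fun h3 => absurd (h3.trans h2) (by omega)⟩
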